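/- Shift invariance of the full propagator: if Δt ≥ 0 and either s_f + Δt < 0 or s_i > 0, then each term of the Dyson series for G(s_i, s_f) is invariant under the shift (s_i, s_f) ↦ (s_i + Δt, s_f + Δt); consequently G(s_i + Δt, s_f + Δt) = G(s_i, s_f). -/

import Mathlib

open MeasureTheory

/-- A perfect pairing of `{1,...,m}`. -/
def IsPairing {m : ℕ} (P : Finset (Fin m × Fin m)) : Prop :=
  (∀ p ∈ P, p.1 < p.2) ∧ ∀ x : Fin m, ∃! p, p ∈ P ∧ (x = p.1 ∨ x = p.2)

open scoped Classical in
/-- The set `Q(s_1,...,s_m)` of perfect pairings of indices. -/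
noncomputable def pairings (m : ℕ) : Finset (Finset (Fin m × Fin m)) :=
  Finset.univ.filter IsPairing

/-- The bath influence functional (Wick pairing sum). -/
noncomputable def Lb {m : ℕ} (B : ℝ → ℝ → ℂ) (s : Fin m → ℝ) : ℂ :=
  ∑ P ∈ pairings m, ∏ p ∈ P, B (s p.1) (s p.2)

/-- The bare system propagator `G_s^{(0)}(s_i,s_f)`. -/
noncomputable def Gs0 (Hs Os : Matrix (Fin 2) (Fin 2) ℂ) (si sf : ℝ) :
    Matrix (Fin 2) (Fin 2) ℂ :=
  if sf < 0 then NormedSpace.exp ((-Complex.I * ((sf : ℂ) - si)) • Hs)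
  else if 0 ≤ si then NormedSpace.exp ((-Complex.I * ((si : ℂ) - sf)) • Hs)
  else NormedSpace.exp ((Complex.I * sf) • Hs) * Os *
    NormedSpace.exp ((Complex.I * si) • Hs)

/-- `𝒰^{(0)}(lo, s_1,...,s_m, hi) = G_s^{(0)}(s_m,hi) W_s ⋯ W_s G_s^{(0)}(lo,s_1)`. -/
noncomputable def U0 (Hs Ws Os : Matrix (Fin 2) (Fin 2) ℂ) :
    List ℝ → ℝ → ℝ → Matrix (Fin 2) (Fin 2) ℂ
  | [], lo, hi => Gs0 Hs Os lo hi
  | x :: rest, lo, hi => U0 Hs Ws Os rest x hi * Ws * Gs0 Hs Os lo x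

/-- The ordered simplex `{a ≤ s_1 ≤ ... ≤ s_m ≤ b}`. -/
def simplexSet (m : ℕ) (a b : ℝ) : Set (Fin m → ℝ) :=
  {s | Monotone s ∧ ∀ i, a ≤ s i ∧ s i ≤ b}

/-- The number of negative components of `s`. -/
noncomputable def negCount {m : ℕ} (s : Fin m → ℝ) : ℕ :=
  (Finset.univ.filter fun i => s i < 0).card

/-- The `m`-th term of the Dyson series for the full propagator `G(s_i,s_f)`:
`i^m ∫_{s_i ≤ s ≤ s_f} (−1)^{#{s<0}} 𝒰^{(0)}(s_i,s,s_f) L_b(s) ds` (entrywise integral). -/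
noncomputable def dysonTerm (Hs Ws Os : Matrix (Fin 2) (Fin 2) ℂ) (B : ℝ → ℝ → ℂ)
    (m : ℕ) (si sf : ℝ) : Matrix (Fin 2) (Fin 2) ℂ :=
  Matrix.of fun a c =>
    ∫ s in simplexSet m si sf,
      Complex.I ^ m * (-1 : ℂ) ^ negCount s * Lb B s * (U0 Hs Ws Os (List.ofFn s) si sf) a c

open scoped Classical in
/-- The full propagator truncated at order `M`. -/
noncomputable def fullPropagator (Hs Ws Os : Matrix (Fin 2) (Fin 2) ℂ) (B : ℝ → ℝ → ℂ)
    (M : ℕ) (si sf : ℝ) : Matrix (Fin 2) (Fin 2) ℂ :=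
  Gs0 Hs Os si sf +
    ∑ m ∈ (Finset.range (M + 1)).filter (fun m => Even m ∧ 2 ≤ m),
      dysonTerm Hs Ws Os B m si sf

lemma Gs0_shift (Hs Os : Matrix (Fin 2) (Fin 2) ℂ) (Δt a b : ℝ) (hΔt : 0 ≤ Δt)
    (h : b + Δt < 0 ∨ (0 ≤ a ∧ 0 ≤ b)) :
    Gs0 Hs Os (a + Δt) (b + Δt) = Gs0 Hs Os a b := by
  unfold Gs0
  rcases h with h | ⟨ha, hb⟩
  · have hb : b < 0 := by linarith
    rw [if_pos h, if_pos hb]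
    congr 2
    push_cast; ring
  · have h1 : ¬ (b + Δt < 0) := by linarith
    have h2 : ¬ (b < 0) := by linarith
    have h3 : (0:ℝ) ≤ a + Δt := by linarith
    rw [if_neg h1, if_neg h2, if_pos h3, if_pos ha]
    congr 2
    push_cast; ring

lemma U0_shift (Hs Ws Os : Matrix (Fin 2) (Fin 2) ℂ) (Δt : ℝ) (hΔt : 0 ≤ Δt) :
    ∀ (L : List ℝ) (lo hi : ℝ),
    ((∀ t ∈ lo :: hi :: L, t + Δt < 0) ∨ (∀ t ∈ lo :: hi :: L, 0 ≤ t)) →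
    U0 Hs Ws Os (L.map (· + Δt)) (lo + Δt) (hi + Δt) = U0 Hs Ws Os L lo hi
  | [], lo, hi, h => by
      simp only [List.map_nil, U0]
      apply Gs0_shift Hs Os Δt lo hi hΔt
      rcases h with h | h
      · exact Or.inl (h hi (by simp))
      · exact Or.inr ⟨h lo (by simp), h hi (by simp)⟩
  | x :: rest, lo, hi, h => by
      simp only [List.map_cons, U0]
      rw [U0_shift Hs Ws Os Δt hΔt rest x hi ?side]
      case side =>
        rcases h with h | h
        · exact Or.inl fun t ht => h t (by simp at ht ⊢; tauto)
        · exact Or.inr fun t ht => h t (by simp at ht ⊢; tauto)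
      congr 1
      apply Gs0_shift Hs Os Δt lo x hΔt
      rcases h with h | h
      · exact Or.inl (h x (by simp))
      · exact Or.inr ⟨h lo (by simp), h x (by simp)⟩

lemma Lb_shift {m : ℕ} (F : ℝ → ℂ) (B : ℝ → ℝ → ℂ)
    (hB : ∀ τ₁ τ₂, B τ₁ τ₂ = F (|τ₁| - |τ₂|)) (Δt : ℝ) (s : Fin m → ℝ)
    (h : (∀ i, s i + Δt < 0 ∧ s i < 0) ∨ (∀ i, 0 ≤ s i ∧ 0 ≤ s i + Δt)) :
    Lb B (fun i => s i + Δt) = Lb B s := by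
  unfold Lb
  refine Finset.sum_congr rfl fun P _ => Finset.prod_congr rfl fun p _ => ?_
  rw [hB, hB]
  rcases h with h | h
  · rw [abs_of_neg (h p.1).1, abs_of_neg (h p.2).1, abs_of_neg (h p.1).2,
      abs_of_neg (h p.2).2]
    ring_nf
  · rw [abs_of_nonneg (h p.1).1, abs_of_nonneg (h p.2).1, abs_of_nonneg (h p.1).2,
      abs_of_nonneg (h p.2).2]
    ring_nf

lemma negCount_shift {m : ℕ} (Δt : ℝ) (s : Fin m → ℝ)
    (h : (∀ i, s i + Δt < 0 ∧ s i < 0) ∨ (∀ i, 0 ≤ s i ∧ 0 ≤ s i + Δt)) :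
    negCount (fun i => s i + Δt) = negCount s := by
  unfold negCount
  congr 1
  apply Finset.filter_congr
  intro i _
  rcases h with h | h
  · simp [(h i).1, (h i).2]
  · simp [not_lt.2 (h i).1, not_lt.2 (h i).2]

lemma measurableSet_simplexSet (m : ℕ) (a b : ℝ) : MeasurableSet (simplexSet m a b) := by
  have : simplexSet m a b =
      (⋂ i : Fin m, ⋂ j : Fin m, ⋂ _ : i ≤ j, {s : Fin m → ℝ | s i ≤ s j}) ∩
      ⋂ i : Fin m, ({s : Fin m → ℝ | a ≤ s i} ∩ {s : Fin m → ℝ | s i ≤ b}) := by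
    ext s
    simp only [simplexSet, Set.mem_setOf_eq, Set.mem_inter_iff, Set.mem_iInter, Monotone]
  rw [this]
  refine MeasurableSet.inter ?_ ?_
  · exact MeasurableSet.iInter fun i => MeasurableSet.iInter fun j =>
      MeasurableSet.iInter fun _ =>
        measurableSet_le (measurable_pi_apply i) (measurable_pi_apply j)
  · exact MeasurableSet.iInter fun i =>
      (measurableSet_le measurable_const (measurable_pi_apply i)).inter
        (measurableSet_le (measurable_pi_apply i) measurable_const)

/-- Shift invariance of the full propagator: if `Δt ≥ 0` and either `s_f + Δt < 0`
or `s_i > 0`, then each term of the Dyson series is invariant under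
`(s_i,s_f) ↦ (s_i+Δt, s_f+Δt)`; consequently `G(s_i+Δt, s_f+Δt) = G(s_i,s_f)`
for the truncated full propagator. Here the two-point correlation `B` depends only
on `|τ₁| − |τ₂|`. -/
theorem dyson_shift_invariance (Hs Ws Os : Matrix (Fin 2) (Fin 2) ℂ)
    (F : ℝ → ℂ) (B : ℝ → ℝ → ℂ) (hB : ∀ τ₁ τ₂, B τ₁ τ₂ = F (|τ₁| - |τ₂|))
    (Δt : ℝ) (hΔt : 0 ≤ Δt) (si sf : ℝ) (h : si ≤ sf)
    (hside : sf + Δt < 0 ∨ 0 < si) (M : ℕ) :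
    (∀ m : ℕ, dysonTerm Hs Ws Os B m (si + Δt) (sf + Δt) = dysonTerm Hs Ws Os B m si sf) ∧
    fullPropagator Hs Ws Os B M (si + Δt) (sf + Δt) = fullPropagator Hs Ws Os B M si sf := by
  have hGs0 : Gs0 Hs Os (si + Δt) (sf + Δt) = Gs0 Hs Os si sf := by
    apply Gs0_shift Hs Os Δt si sf hΔt
    rcases hside with hs | hs
    · exact Or.inl hs
    · exact Or.inr ⟨le_of_lt hs, le_of_lt (lt_of_lt_of_le hs h)⟩
  have hterm : ∀ m : ℕ,
      dysonTerm Hs Ws Os B m (si + Δt) (sf + Δt) = dysonTerm Hs Ws Os B m si sf := by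
    intro m
    unfold dysonTerm
    ext a c
    simp only [Matrix.of_apply]
    set c' : Fin m → ℝ := fun _ => Δt with hc'
    set f : (Fin m → ℝ) → ℂ := fun s =>
      Complex.I ^ m * (-1 : ℂ) ^ negCount s * Lb B s *
        (U0 Hs Ws Os (List.ofFn s) (si + Δt) (sf + Δt)) a c with hf
    have hmem : ∀ x : Fin m → ℝ, x + c' ∈ simplexSet m (si + Δt) (sf + Δt) ↔
        x ∈ simplexSet m si sf := by
      intro x
      simp only [simplexSet, Set.mem_setOf_eq, Pi.add_apply, hc']
      constructor
      · rintro ⟨h1, h2⟩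
        refine ⟨fun i j hij => ?_, fun i => ⟨by linarith [(h2 i).1], by linarith [(h2 i).2]⟩⟩
        have := h1 hij; simpa using this
      · rintro ⟨h1, h2⟩
        refine ⟨fun i j hij => ?_, fun i => ⟨by linarith [(h2 i).1], by linarith [(h2 i).2]⟩⟩
        have := h1 hij; simpa using this
    calc (∫ s in simplexSet m (si + Δt) (sf + Δt), f s)
        = ∫ s, (simplexSet m (si + Δt) (sf + Δt)).indicator f s := by
          rw [integral_indicator (measurableSet_simplexSet _ _ _)]
      _ = ∫ s, (simplexSet m (si + Δt) (sf + Δt)).indicator f (s + c') := by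
          rw [integral_add_right_eq_self]
      _ = ∫ s, (simplexSet m si sf).indicator (fun x => f (x + c')) s := by
          congr 1
          funext x
          by_cases hx : x ∈ simplexSet m si sf
          · rw [Set.indicator_of_mem ((hmem x).2 hx), Set.indicator_of_mem hx]
          · rw [Set.indicator_of_notMem (fun hh => hx ((hmem x).1 hh)),
              Set.indicator_of_notMem hx]
      _ = ∫ s in simplexSet m si sf, f (s + c') := by
          rw [integral_indicator (measurableSet_simplexSet _ _ _)]
      _ = ∫ s in simplexSet m si sf,
            Complex.I ^ m * (-1 : ℂ) ^ negCount s * Lb B s *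
              (U0 Hs Ws Os (List.ofFn s) si sf) a c := by
          apply setIntegral_congr_fun (measurableSet_simplexSet _ _ _)
          intro s hs
          obtain ⟨hmono, hbd⟩ := hs
          have hsc : s + c' = fun i => s i + Δt := rfl
          have hside' : (∀ i, s i + Δt < 0 ∧ s i < 0) ∨
              (∀ i, 0 ≤ s i ∧ 0 ≤ s i + Δt) := by
            rcases hside with hn | hp
            · exact Or.inl fun i => ⟨by linarith [(hbd i).2], by linarith [(hbd i).2]⟩
            · exact Or.inr fun i => ⟨by linarith [(hbd i).1], by linarith [(hbd i).1]⟩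
          have hU : (U0 Hs Ws Os (List.ofFn (fun i => s i + Δt)) (si + Δt) (sf + Δt)) =
              U0 Hs Ws Os (List.ofFn s) si sf := by
            have hofn : List.ofFn (fun i => s i + Δt) = (List.ofFn s).map (· + Δt) := by
              simp [List.map_ofFn]; rfl
            rw [hofn]
            apply U0_shift Hs Ws Os Δt hΔt
            rcases hside with hn | hp
            · refine Or.inl fun t ht => ?_
              simp only [List.mem_cons, List.mem_ofFn] at ht
              rcases ht with rfl | rfl | ⟨i, rfl⟩
              · linarith
              · linarith
              · linarith [(hbd i).2]
            · refine Or.inr fun t ht => ?_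
              simp only [List.mem_cons, List.mem_ofFn] at ht
              rcases ht with rfl | rfl | ⟨i, rfl⟩
              · linarith
              · linarith
              · linarith [(hbd i).1]
          simp only [hf, hsc]
          rw [negCount_shift Δt s hside', Lb_shift F B hB Δt s hside', hU]
  refine ⟨hterm, ?_⟩
  unfold fullPropagator
  rw [hGs0]
  congr 1
  exact Finset.sum_congr rfl fun m _ => hterm m
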